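/- For all n ≥ 2, one has 2*∑_{p} d^2*A(n,p)^2 ≤ d^2*(∑_p A(n,p))^2 for every positive integer d; equivalently, 2*∑_p A(n,p)^2 ≤ (n!)^2. -/

import Mathlib

/-- The Eulerian number `A(n,q)`: the number of permutations of `{1,...,n}`
with exactly `q` ascents.  (In particular `A(n,q) = 0` unless `0 ≤ q < n`.) -/
def eulerian (n q : ℕ) : ℕ :=
  (Finset.univ.filter fun σ : Equiv.Perm (Fin n) =>
    (Finset.univ.filter fun i : Fin n =>
      ∃ j : Fin n, (j : ℕ) = (i : ℕ) + 1 ∧ σ i < σ j).card = q).card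

namespace EulerAux

open Finset Equiv Fin.CommRing

variable {n : ℕ} [NeZero n]

/-- cyclic ascent set -/
def casc (σ : Perm (Fin n)) : Finset (Fin n) :=
  univ.filter fun i => σ i < σ (i + 1)

/-- linear ascent set -/
def lasc (σ : Perm (Fin n)) : Finset (Fin n) :=
  univ.filter fun i => i + 1 ≠ 0 ∧ σ i < σ (i + 1)

/-- linear descent set -/
def ldsc (σ : Perm (Fin n)) : Finset (Fin n) :=
  univ.filter fun i => i + 1 ≠ 0 ∧ σ (i + 1) < σ i

lemma val_add_one {i : Fin n} (h : i + 1 ≠ 0) : ((i + 1 : Fin n) : ℕ) = (i : ℕ) + 1 := by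
  rcases Nat.lt_or_ge 1 n with h2 | h2
  · have h1 : ((1 : Fin n) : ℕ) = 1 := by rw [Fin.val_one']; exact Nat.mod_eq_of_lt h2
    have hite := Fin.val_add_eq_ite i 1
    rw [h1] at hite
    split_ifs at hite with hc
    · exfalso
      apply h
      apply Fin.ext
      rw [Fin.val_zero, hite]
      have := i.isLt
      omega
    · exact hite
  · exfalso
    apply h
    have hn1 : n = 1 := by have := Nat.pos_of_ne_zero (NeZero.ne n); omega
    subst hn1
    exact Subsingleton.elim _ _

lemma filter_eq_lasc (σ : Perm (Fin n)) :
    (univ.filter fun i : Fin n =>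
      ∃ j : Fin n, (j : ℕ) = (i : ℕ) + 1 ∧ σ i < σ j) = lasc σ := by
  unfold lasc
  apply Finset.filter_congr
  intro i _
  constructor
  · rintro ⟨j, hj, hlt⟩
    have hj2 : (i : ℕ) + 1 < n := by
      have := j.isLt
      omega
    have h1 : ((1 : Fin n) : ℕ) = 1 := by
      rw [Fin.val_one']
      exact Nat.mod_eq_of_lt (by omega)
    have hval : ((i + 1 : Fin n) : ℕ) = (i : ℕ) + 1 := by
      have hite := Fin.val_add_eq_ite i 1
      rw [h1] at hite
      split_ifs at hite with hc
      · omega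
      · exact hite
    have hne : i + 1 ≠ 0 := by
      intro h0
      rw [h0, Fin.val_zero] at hval
      omega
    have hj' : j = i + 1 := Fin.ext (by rw [hval, hj])
    exact ⟨hne, hj' ▸ hlt⟩
  · rintro ⟨hne, hlt⟩
    exact ⟨i + 1, val_add_one hne, hlt⟩

lemma eulerian_eq (q : ℕ) :
    eulerian n q = (univ.filter fun σ : Perm (Fin n) => (lasc σ).card = q).card := by
  unfold eulerian
  congr 1
  apply Finset.filter_congr
  intro σ _
  rw [filter_eq_lasc]

lemma lasc_card_le (σ : Perm (Fin n)) : (lasc σ).card ≤ n - 1 := by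
  have h : lasc σ ⊆ univ.erase (-1 : Fin n) := by
    intro i hi
    simp only [lasc, mem_filter] at hi
    apply Finset.mem_erase.mpr
    refine ⟨?_, mem_univ _⟩
    intro h0
    exact hi.2.1 (by rw [h0]; ring)
  calc (lasc σ).card ≤ (univ.erase (-1 : Fin n)).card := Finset.card_le_card h
    _ = n - 1 := by rw [Finset.card_erase_of_mem (mem_univ _), Finset.card_univ, Fintype.card_fin]

lemma sum_eulerian : ∑ p ∈ Finset.range n, eulerian n p = n.factorial := by
  have hn : 0 < n := Nat.pos_of_ne_zero (NeZero.ne n)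
  have := Finset.card_eq_sum_card_fiberwise
    (f := fun σ : Perm (Fin n) => (lasc σ).card) (s := univ) (t := Finset.range n)
    (fun σ _ => Finset.mem_range.mpr (lt_of_le_of_lt (lasc_card_le σ) (by omega)))
  rw [Finset.card_univ, Fintype.card_perm, Fintype.card_fin] at this
  exact (Finset.sum_congr rfl fun p _ => eulerian_eq p).trans this.symm

lemma rev_eq_neg (x : Fin n) : Fin.rev x = -(x + 1) := by
  rcases Nat.exists_eq_succ_of_ne_zero (NeZero.ne n) with ⟨m, rfl⟩
  have h1 : Fin.rev x = Fin.rev 0 - x := by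
    rw [← Fin.rev_add]; norm_num
  have h0 : Fin.rev (0 : Fin (m+1)) = Fin.last m := by simp
  have hl : (Fin.last m : Fin (m+1)) = -1 := by
    rw [← neg_neg (Fin.last m), Fin.neg_last]
  rw [h1, h0, hl]
  ring

lemma ne_add_one {i : Fin n} (h : i + 1 ≠ 0) : i ≠ i + 1 := by
  intro he
  apply h
  have h10 : (1 : Fin n) = 0 := by
    have h2 : i + 0 = i + 1 := by rw [add_zero, ← he]
    exact (add_left_cancel h2).symm
  have hval : (1 : ℕ) % n = 0 := by
    have h3 := congrArg Fin.val h10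
    rwa [Fin.val_one', Fin.val_zero] at h3
  have hn : n = 1 := by
    rcases Nat.lt_or_ge 1 n with h2 | h2
    · rw [Nat.mod_eq_of_lt h2] at hval; omega
    · have := Nat.pos_of_ne_zero (NeZero.ne n); omega
  subst hn
  exact Subsingleton.elim _ _

lemma card_lasc_add_ldsc (σ : Perm (Fin n)) : (lasc σ).card + (ldsc σ).card = n - 1 := by
  have hdis : Disjoint (lasc σ) (ldsc σ) := by
    rw [Finset.disjoint_left]
    intro i h1 h2
    simp only [lasc, ldsc, mem_filter] at h1 h2
    exact absurd h2.2.2 (not_lt.mpr (le_of_lt h1.2.2))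
  have hunion : lasc σ ∪ ldsc σ = univ.filter (fun i => i + 1 ≠ 0) := by
    ext i
    simp only [lasc, ldsc, mem_union, mem_filter, mem_univ, true_and]
    constructor
    · rintro (⟨h1, _⟩ | ⟨h1, _⟩) <;> exact h1
    · intro h1
      have hne : σ i ≠ σ (i + 1) := fun he => (ne_add_one h1) (σ.injective he)
      rcases lt_or_gt_of_ne hne with h2 | h2
      · exact Or.inl ⟨h1, h2⟩
      · exact Or.inr ⟨h1, h2⟩
  have hcard : (univ.filter (fun i : Fin n => i + 1 ≠ 0)).card = n - 1 := by
    have he : (univ.filter (fun i : Fin n => i + 1 ≠ 0)) = univ.erase (-1 : Fin n) := by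
      ext i
      simp only [mem_filter, mem_univ, true_and, mem_erase, and_true]
      exact not_congr add_eq_zero_iff_eq_neg
    rw [he, Finset.card_erase_of_mem (mem_univ _), Finset.card_univ, Fintype.card_fin]
  rw [← Finset.card_union_of_disjoint hdis, hunion, hcard]

lemma card_lasc_rev (σ : Perm (Fin n)) :
    (lasc (σ * Fin.revPerm)).card = (ldsc σ).card := by
  refine Finset.card_nbij' (fun i => Fin.rev (i + 1)) (fun j => Fin.rev (j + 1)) ?_ ?_ ?_ ?_
  · intro i hi
    simp only [Finset.mem_coe, lasc, ldsc, mem_filter] at hi ⊢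
    simp only [lasc, ldsc, mem_filter, mem_univ, true_and, Perm.mul_apply] at hi ⊢
    obtain ⟨h1, h2⟩ := hi
    have e1 : Fin.rev (i + 1) + 1 = Fin.rev i := by
      rw [rev_eq_neg, rev_eq_neg]; ring
    refine ⟨?_, ?_⟩
    · intro h0
      apply h1
      rwa [e1, rev_eq_neg, neg_eq_zero] at h0
    · rw [e1]
      simpa [Fin.revPerm] using h2
  · intro j hj
    simp only [Finset.mem_coe, lasc, ldsc, mem_filter] at hj ⊢
    simp only [lasc, ldsc, mem_filter, mem_univ, true_and, Perm.mul_apply] at hj ⊢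
    obtain ⟨h1, h2⟩ := hj
    have e1 : Fin.rev (j + 1) + 1 ≠ 0 := by
      rw [rev_eq_neg]
      intro h0
      apply h1
      have : -(j + 1 + 1) + 1 = -(j + 1) := by ring
      rw [this, neg_eq_zero] at h0
      exact h0
    refine ⟨e1, ?_⟩
    have e2 : Fin.revPerm (Fin.rev (j + 1)) = j + 1 := by simp
    have e3 : Fin.revPerm (Fin.rev (j + 1) + 1) = j := by
      simp only [Fin.revPerm_apply]
      rw [rev_eq_neg, rev_eq_neg]
      ring
    rw [e2, e3]
    exact h2
  · intro i _
    simp only [rev_eq_neg]; ring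
  · intro j _
    simp only [rev_eq_neg]; ring

omit [NeZero n] in
lemma card_filter_mulRight (e : Perm (Fin n)) (p : Perm (Fin n) → Prop) [DecidablePred p] :
    (univ.filter fun σ : Perm (Fin n) => p (σ * e)).card = (univ.filter p).card := by
  refine Finset.card_nbij' (fun σ => σ * e) (fun τ => τ * e⁻¹) ?_ ?_ ?_ ?_ <;>
    intro σ hσ <;> simp_all [mul_assoc]

lemma eulerian_symm {p : ℕ} (hp : p < n) : eulerian n (n - 1 - p) = eulerian n p := by
  rw [eulerian_eq, eulerian_eq,
    ← card_filter_mulRight (Fin.revPerm) (fun σ => (lasc σ).card = n - 1 - p)]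
  congr 1
  apply Finset.filter_congr
  intro σ _
  have h1 := card_lasc_rev σ
  have h2 := card_lasc_add_ldsc σ
  have h3 := lasc_card_le σ
  have h4 := lasc_card_le (σ * Fin.revPerm)
  constructor
  · intro h; omega
  · intro h; omega

/-! ### Rotation double counting -/

/-- rotate the word of `σ` by `t` -/
def rot (t : Fin n) (σ : Perm (Fin n)) : Perm (Fin n) := σ * Equiv.addRight t

lemma card_lasc_rot (t : Fin n) (σ : Perm (Fin n)) :
    (lasc (rot t σ)).card = ((casc σ).erase (t - 1)).card := by
  refine Finset.card_nbij' (fun i => i + t) (fun j => j - t) ?_ ?_ ?_ ?_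
  · intro i hi
    simp only [Finset.mem_coe, lasc, casc, mem_filter, mem_erase] at hi ⊢
    simp only [lasc, casc, rot, mem_filter, mem_univ, true_and, mem_erase,
      Perm.mul_apply, Equiv.coe_addRight] at hi ⊢
    obtain ⟨h1, h2⟩ := hi
    refine ⟨?_, ?_⟩
    · intro h0
      apply h1
      have : i = -1 := by
        have := congrArg (fun x => x - t) h0
        simpa [sub_eq_add_neg, add_assoc] using this
      rw [this]; ring
    · have e : (i + t) + 1 = (i + 1) + t := by ring
      rw [e]; exact h2
  · intro j hj
    simp only [Finset.mem_coe, lasc, casc, mem_filter, mem_erase] at hj ⊢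
    simp only [lasc, casc, rot, mem_filter, mem_univ, true_and, mem_erase,
      Perm.mul_apply, Equiv.coe_addRight] at hj ⊢
    obtain ⟨h1, h2⟩ := hj
    refine ⟨?_, ?_⟩
    · intro h0
      apply h1
      have : j - t = -1 := by
        have := congrArg (fun x => x - 1) h0
        simpa [sub_eq_add_neg, add_assoc] using this
      have := congrArg (fun x => x + t) this
      simpa [sub_eq_add_neg, add_assoc, add_comm] using this
    · have e1 : j - t + t = j := by ring
      have e2 : j - t + 1 + t = j + 1 := by ring
      rw [e1, e2]; exact h2
  · intro i _; ring
  · intro j _; ring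

lemma card_erase_bound {m : ℕ} (hm : 1 ≤ m) (hn : n = 2 * m + 1) (C : Finset (Fin n)) :
    (univ.filter fun u : Fin n => (C.erase u).card = m).card ≤ m + 1 := by
  by_cases hk : C.card = m
  · have hsub : (univ.filter fun u : Fin n => (C.erase u).card = m) ⊆ univ \ C := by
      intro u hu
      simp only [mem_filter, mem_univ, true_and, mem_sdiff] at hu ⊢
      intro huC
      rw [Finset.card_erase_of_mem huC] at hu
      omega
    calc (univ.filter fun u : Fin n => (C.erase u).card = m).card
        ≤ (univ \ C).card := Finset.card_le_card hsub
      _ = n - C.card := by rw [Finset.card_sdiff_of_subset (Finset.subset_univ _), Finset.card_univ, Fintype.card_fin]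
      _ ≤ m + 1 := by omega
  · by_cases hk1 : C.card = m + 1
    · have hsub : (univ.filter fun u : Fin n => (C.erase u).card = m) ⊆ C := by
        intro u hu
        simp only [mem_filter, mem_univ, true_and] at hu
        by_contra huC
        rw [Finset.erase_eq_of_notMem huC] at hu
        omega
      calc (univ.filter fun u : Fin n => (C.erase u).card = m).card
          ≤ C.card := Finset.card_le_card hsub
        _ = m + 1 := hk1
    · have hempty : (univ.filter fun u : Fin n => (C.erase u).card = m) = ∅ := by
        rw [Finset.eq_empty_iff_forall_notMem]
        intro u hu
        simp only [mem_filter, mem_univ, true_and] at hu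
        by_cases huC : u ∈ C
        · rw [Finset.card_erase_of_mem huC] at hu
          have := Finset.card_pos.mpr ⟨u, huC⟩
          omega
        · rw [Finset.erase_eq_of_notMem huC] at hu
          exact hk hu
      rw [hempty]
      simp

lemma card_rot_filter_eq (t : Fin n) (m : ℕ) :
    (univ.filter fun σ : Perm (Fin n) => (lasc (rot t σ)).card = m).card
      = (univ.filter fun σ : Perm (Fin n) => (lasc σ).card = m).card :=
  card_filter_mulRight (Equiv.addRight t) (fun τ => (lasc τ).card = m)

lemma key_bound {m : ℕ} (hm : 1 ≤ m) (hn : n = 2 * m + 1) :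
    n * eulerian n m ≤ (m + 1) * n.factorial := by
  have h1 : ∀ σ : Perm (Fin n),
      (univ.filter fun t : Fin n => (lasc (rot t σ)).card = m).card ≤ m + 1 := by
    intro σ
    have he : (univ.filter fun t : Fin n => (lasc (rot t σ)).card = m).card
        = (univ.filter fun u : Fin n => ((casc σ).erase u).card = m).card := by
      refine Finset.card_nbij' (fun t => t - 1) (fun u => u + 1) ?_ ?_ ?_ ?_
      · intro t ht
        simp only [mem_coe, mem_filter, mem_univ, true_and, card_lasc_rot] at ht ⊢
        exact ht
      · intro u hu
        simp only [mem_coe, mem_filter, mem_univ, true_and, card_lasc_rot] at hu ⊢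
        have e : u + 1 - 1 = u := by ring
        rw [e]; exact hu
      · intro t _; ring
      · intro u _; ring
    rw [he]
    exact card_erase_bound hm hn (casc σ)
  have h2 : n * eulerian n m
      = ∑ t : Fin n, (univ.filter fun σ : Perm (Fin n) => (lasc (rot t σ)).card = m).card := by
    rw [eulerian_eq]
    rw [Finset.sum_congr rfl (fun t _ => card_rot_filter_eq t m)]
    rw [Finset.sum_const, Finset.card_univ, Fintype.card_fin, smul_eq_mul]
  have h3 : ∑ t : Fin n, (univ.filter fun σ : Perm (Fin n) => (lasc (rot t σ)).card = m).card
      = ∑ σ : Perm (Fin n), (univ.filter fun t : Fin n => (lasc (rot t σ)).card = m).card := by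
    simp only [Finset.card_filter]
    exact Finset.sum_comm
  calc n * eulerian n m
      = ∑ σ : Perm (Fin n), (univ.filter fun t : Fin n => (lasc (rot t σ)).card = m).card := by
        rw [h2, h3]
    _ ≤ ∑ _σ : Perm (Fin n), (m + 1) := Finset.sum_le_sum (fun σ _ => h1 σ)
    _ = (m + 1) * n.factorial := by
        rw [Finset.sum_const, Finset.card_univ, Fintype.card_perm, Fintype.card_fin,
          smul_eq_mul, mul_comm]


lemma key_ineq (hn2 : 2 ≤ n) :
    2 * ∑ p ∈ Finset.range n, (eulerian n p) ^ 2 ≤ (∑ p ∈ Finset.range n, eulerian n p) ^ 2 := by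
  classical
  set a := eulerian n with ha
  set R := Finset.range n with hR
  set T := R ×ˢ R with hT
  set D := T.filter (fun z => z.1 = z.2) with hDdef
  set AD := T.filter (fun z => z.1 + z.2 = n - 1) with hADdef
  have hRHS : (∑ p ∈ R, a p) ^ 2 = ∑ z ∈ T, a z.1 * a z.2 := by
    rw [sq, Finset.sum_mul_sum, hT, Finset.sum_product]
  have hDsum : ∑ z ∈ D, a z.1 * a z.2 = ∑ p ∈ R, a p ^ 2 := by
    refine Finset.sum_nbij' (fun z => z.1) (fun p => (p, p)) ?_ ?_ ?_ ?_ ?_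
    · intro z hz
      simp only [hDdef, hT, Finset.mem_filter, Finset.mem_product] at hz
      exact hz.1.1
    · intro p hp
      simp only [hDdef, hT, Finset.mem_filter, Finset.mem_product]
      exact ⟨⟨hp, hp⟩, trivial⟩
    · intro z hz
      simp only [hDdef, hT, Finset.mem_filter, Finset.mem_product] at hz
      refine Prod.ext rfl ?_
      simp only
      omega
    · intro p _
      rfl
    · intro z hz
      simp only [hDdef, hT, Finset.mem_filter, Finset.mem_product] at hz
      rw [← hz.2, sq]
  have hADsum : ∑ z ∈ AD, a z.1 * a z.2 = ∑ p ∈ R, a p ^ 2 := by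
    refine Finset.sum_nbij' (fun z => z.1) (fun p => (p, n - 1 - p)) ?_ ?_ ?_ ?_ ?_
    · intro z hz
      simp only [hADdef, hT, Finset.mem_filter, Finset.mem_product] at hz
      exact hz.1.1
    · intro p hp
      simp only [hADdef, hT, hR, Finset.mem_filter, Finset.mem_product, Finset.mem_range] at hp ⊢
      omega
    · intro z hz
      simp only [hADdef, hT, hR, Finset.mem_filter, Finset.mem_product, Finset.mem_range] at hz
      refine Prod.ext rfl ?_
      simp only
      omega
    · intro p _
      rfl
    · intro z hz
      simp only [hADdef, hT, hR, Finset.mem_filter, Finset.mem_product, Finset.mem_range] at hz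
      have hz2 : z.2 = n - 1 - z.1 := by omega
      have hz1 : z.1 < n := hz.1.1
      rw [hz2, ha, eulerian_symm hz1, sq]
  have hsub : D ∪ AD ⊆ T :=
    Finset.union_subset (Finset.filter_subset _ _) (Finset.filter_subset _ _)
  rcases Nat.even_or_odd n with he | ho
  · obtain ⟨k, hk⟩ := he
    have hdisj : Disjoint D AD := by
      rw [Finset.disjoint_left]
      intro z h1 h2
      simp only [hDdef, hADdef, Finset.mem_filter] at h1 h2
      omega
    calc 2 * ∑ p ∈ R, a p ^ 2
        = ∑ z ∈ D, a z.1 * a z.2 + ∑ z ∈ AD, a z.1 * a z.2 := by rw [hDsum, hADsum]; ring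
      _ = ∑ z ∈ D ∪ AD, a z.1 * a z.2 := (Finset.sum_union hdisj).symm
      _ ≤ ∑ z ∈ T, a z.1 * a z.2 := Finset.sum_le_sum_of_subset hsub
      _ = (∑ p ∈ R, a p) ^ 2 := hRHS.symm
  · obtain ⟨m, hm⟩ := ho
    have hm1 : 1 ≤ m := by omega
    have hmR : m ∈ R := by simp only [hR, Finset.mem_range]; omega
    have hInter : D ∩ AD = {(m, m)} := by
      ext z
      simp only [hDdef, hADdef, hT, hR, Finset.mem_inter, Finset.mem_filter,
        Finset.mem_product, Finset.mem_range, Finset.mem_singleton, Prod.ext_iff]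
      omega
    have h3am : 3 * a m ≤ 2 * ∑ p ∈ R, a p := by
      have hkb := key_bound (n := n) hm1 (by omega)
      rw [hR, ha, sum_eulerian]
      have hmul : n * (3 * eulerian n m) ≤ n * (2 * n.factorial) := by
        calc n * (3 * eulerian n m) = 3 * (n * eulerian n m) := by ring
          _ ≤ 3 * ((m + 1) * n.factorial) := Nat.mul_le_mul_left _ hkb
          _ = (3 * (m + 1)) * n.factorial := by ring
          _ ≤ (n * 2) * n.factorial := Nat.mul_le_mul_right _ (by omega)
          _ = n * (2 * n.factorial) := by ring
      exact Nat.le_of_mul_le_mul_left hmul (by omega)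
    have hamS : a m ≤ ∑ p ∈ R, a p :=
      Finset.single_le_sum (fun p _ => Nat.zero_le _) hmR
    set X1 := ({m} : Finset ℕ) ×ˢ (R.erase m) with hX1def
    set X2 := (R.erase m) ×ˢ ({m} : Finset ℕ) with hX2def
    have hEr : ∑ q ∈ R.erase m, a q = ∑ p ∈ R, a p - a m := by
      have := Finset.add_sum_erase R a hmR
      omega
    have hX1sum : ∑ z ∈ X1, a z.1 * a z.2 = a m * (∑ p ∈ R, a p - a m) := by
      rw [hX1def, Finset.sum_product, Finset.sum_singleton]
      show ∑ y ∈ R.erase m, a m * a y = _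
      rw [← Finset.mul_sum, hEr]
    have hX2sum : ∑ z ∈ X2, a z.1 * a z.2 = (∑ p ∈ R, a p - a m) * a m := by
      rw [hX2def, Finset.sum_product]
      simp only [Finset.sum_singleton]
      show ∑ x ∈ R.erase m, a x * a m = _
      rw [← Finset.sum_mul, hEr]
    have hX12disj : Disjoint X1 X2 := by
      rw [Finset.disjoint_left]
      intro z h1 h2
      simp only [hX1def, hX2def, Finset.mem_product, Finset.mem_singleton,
        Finset.mem_erase] at h1 h2
      exact h1.2.1 h2.2
    have hXT : X1 ∪ X2 ⊆ T := by
      apply Finset.union_subset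
      · intro z hz
        simp only [hX1def, hT, hR, Finset.mem_product, Finset.mem_singleton,
          Finset.mem_erase, Finset.mem_range] at hz ⊢
        refine ⟨by omega, hz.2.2⟩
      · intro z hz
        simp only [hX2def, hT, hR, Finset.mem_product, Finset.mem_singleton,
          Finset.mem_erase, Finset.mem_range] at hz ⊢
        refine ⟨hz.1.2, by omega⟩
    have hDADX : Disjoint (D ∪ AD) (X1 ∪ X2) := by
      rw [Finset.disjoint_left]
      intro z h1 h2
      simp only [hDdef, hADdef, Finset.mem_union, Finset.mem_filter] at h1
      simp only [hX1def, hX2def, Finset.mem_union, Finset.mem_product, Finset.mem_singleton,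
        Finset.mem_erase, hR, Finset.mem_range] at h2
      rcases h2 with h2 | h2
      · rcases h1 with h1 | h1 <;> omega
      · rcases h1 with h1 | h1 <;> omega
    have hXlow : a m * a m ≤ ∑ z ∈ X1 ∪ X2, a z.1 * a z.2 := by
      rw [Finset.sum_union hX12disj, hX1sum, hX2sum]
      have hb : a m ≤ 2 * (∑ p ∈ R, a p - a m) := by omega
      calc a m * a m ≤ a m * (2 * (∑ p ∈ R, a p - a m)) := Nat.mul_le_mul_left _ hb
        _ = a m * (∑ p ∈ R, a p - a m) + (∑ p ∈ R, a p - a m) * a m := by ring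
    calc 2 * ∑ p ∈ R, a p ^ 2
        = ∑ z ∈ D, a z.1 * a z.2 + ∑ z ∈ AD, a z.1 * a z.2 := by rw [hDsum, hADsum]; ring
      _ = ∑ z ∈ D ∪ AD, a z.1 * a z.2 + ∑ z ∈ D ∩ AD, a z.1 * a z.2 :=
          (Finset.sum_union_inter).symm
      _ = ∑ z ∈ D ∪ AD, a z.1 * a z.2 + a m * a m := by rw [hInter, Finset.sum_singleton]
      _ ≤ ∑ z ∈ D ∪ AD, a z.1 * a z.2 + ∑ z ∈ X1 ∪ X2, a z.1 * a z.2 :=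
          Nat.add_le_add_left hXlow _
      _ = ∑ z ∈ (D ∪ AD) ∪ (X1 ∪ X2), a z.1 * a z.2 := (Finset.sum_union hDADX).symm
      _ ≤ ∑ z ∈ T, a z.1 * a z.2 :=
          Finset.sum_le_sum_of_subset (Finset.union_subset hsub hXT)
      _ = (∑ p ∈ R, a p) ^ 2 := hRHS.symm

end EulerAux

/-- For all `n ≥ 2` and every positive integer `d`,
`2 ∑ₚ d² A(n,p)² ≤ d² (∑ₚ A(n,p))²`; equivalently (since `∑ₚ A(n,p) = n!`),
`2 ∑ₚ A(n,p)² ≤ (n!)²`. -/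
theorem eulerian_squared_inequality (n d : ℕ) (hn : 2 ≤ n) (hd : 0 < d) :
    2 * ∑ p ∈ Finset.range n, d ^ 2 * (eulerian n p) ^ 2 ≤
      d ^ 2 * (∑ p ∈ Finset.range n, eulerian n p) ^ 2 := by
  haveI : NeZero n := ⟨by omega⟩
  have key := EulerAux.key_ineq (n := n) hn
  calc 2 * ∑ p ∈ Finset.range n, d ^ 2 * (eulerian n p) ^ 2
      = d ^ 2 * (2 * ∑ p ∈ Finset.range n, (eulerian n p) ^ 2) := by
        rw [← Finset.mul_sum]; ring
    _ ≤ d ^ 2 * (∑ p ∈ Finset.range n, eulerian n p) ^ 2 := Nat.mul_le_mul_left _ key
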